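/- Let (X,p) be a 0-complete partial metric space and let T : X → X be continuous (with respect to the open p-balls) and satisfy p(Tx, T(Tx)) ≤ α·p(x,Tx) for all x ∈ X, where α ∈ (0,1). Then there exists z ∈ X such that p(z,z) = 0 and p(Tz,z) = p(Tz,Tz). -/

import Mathlib

open Filter Topology

/-- A partial metric on a type `X`. -/
structure IsPartialMetric {X : Type*} (p : X → X → ℝ) : Prop where
  nonneg : ∀ x y, 0 ≤ p x y
  symm : ∀ x y, p x y = p y x
  eq_of : ∀ x y, p x x = p x y → p x y = p y y → x = y
  self_le : ∀ x y, p x x ≤ p x y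
  triangle : ∀ x y z, p x z + p y y ≤ p x y + p y z

/-- A sequence `x` converges to `a` in the partial metric `p`:
`lim_{n→∞} p(a, x n) = p(a,a)`. -/
def PConverges {X : Type*} (p : X → X → ℝ) (x : ℕ → X) (a : X) : Prop :=
  Tendsto (fun n => p a (x n)) atTop (𝓝 (p a a))

/-- A sequence is `0`-Cauchy: `lim_{m,n→∞} p(x n, x m) = 0`. -/
def PZeroCauchy {X : Type*} (p : X → X → ℝ) (x : ℕ → X) : Prop :=
  Tendsto (fun mn : ℕ × ℕ => p (x mn.1) (x mn.2)) atTop (𝓝 0)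

/-- `(X,p)` is `0`-complete. -/
def PZeroComplete {X : Type*} (p : X → X → ℝ) : Prop :=
  ∀ x : ℕ → X, PZeroCauchy p x → ∃ a, PConverges p x a ∧ p a a = 0

/-- A set is sequentially closed with respect to `p`-convergence. -/
def SeqClosed {X : Type*} (p : X → X → ℝ) (A : Set X) : Prop :=
  ∀ (x : ℕ → X) (a : X), (∀ n, x n ∈ A) → PConverges p x a → a ∈ A

/-- A sequence is Cauchy in `(X,p)`: the double limit `lim_{m,n→∞} p(x n, x m)`
exists (finite). -/
def PCauchy {X : Type*} (p : X → X → ℝ) (x : ℕ → X) : Prop :=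
  ∃ L : ℝ, Tendsto (fun mn : ℕ × ℕ => p (x mn.1) (x mn.2)) atTop (𝓝 L)

/-- `(X,p)` is complete: every Cauchy sequence converges to some `a` with
`p(a,a) = lim_{m,n→∞} p(x n, x m)`. -/
def PComplete {X : Type*} (p : X → X → ℝ) : Prop :=
  ∀ x : ℕ → X, PCauchy p x → ∃ a, PConverges p x a ∧
    Tendsto (fun mn : ℕ × ℕ => p (x mn.1) (x mn.2)) atTop (𝓝 (p a a))

/-- Continuity of `T : X → X` with respect to the open `p`-balls. -/
def PMContinuous {X : Type*} (p : X → X → ℝ) (T : X → X) : Prop :=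
  ∀ x₀ : X, ∀ ε > (0:ℝ), ∃ δ > (0:ℝ), ∀ y,
    p x₀ y < p x₀ x₀ + δ → p (T x₀) (T y) < p (T x₀) (T x₀) + ε

/-- A set `A` is `0`-compact: every sequence in `A` has a subsequence converging
to some `a ∈ A` with `lim_{n→∞} p(x (k n), a) = p(a,a) = 0`. -/
def PZeroCompact {X : Type*} (p : X → X → ℝ) (A : Set X) : Prop :=
  ∀ x : ℕ → X, (∀ n, x n ∈ A) → ∃ (k : ℕ → ℕ) (a : X), StrictMono k ∧ a ∈ A ∧
    Tendsto (fun n => p (x (k n)) a) atTop (𝓝 (p a a)) ∧ p a a = 0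

/-- for a continuous map satisfying `p(Tx,T²x) ≤ α p(x,Tx)` on a
`0`-complete partial metric space there is `z` with `p(z,z) = 0` and
`p(Tz,z) = p(Tz,Tz)`. -/
theorem exists_point_of_iterated_contraction {X : Type*} [Nonempty X]
    (p : X → X → ℝ) (hp : IsPartialMetric p) (hcomp : PZeroComplete p)
    (T : X → X) (hT : PMContinuous p T)
    (α : ℝ) (hα : α ∈ Set.Ioo (0:ℝ) 1)
    (hcontr : ∀ x, p (T x) (T (T x)) ≤ α * p x (T x)) :
    ∃ z, p z z = 0 ∧ p (T z) z = p (T z) (T z) := by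
  obtain ⟨hα0, hα1⟩ := hα
  set x₀ : X := Classical.arbitrary X
  set x : ℕ → X := fun n => T^[n] x₀ with hx
  have hxsucc : ∀ n, x (n+1) = T (x n) := fun n => Function.iterate_succ_apply' T n x₀
  set c : ℝ := p x₀ (T x₀) with hc
  have hc0 : 0 ≤ c := hp.nonneg _ _
  have h1α : 0 < 1 - α := by linarith
  set K : ℝ := c / (1 - α) with hK
  have hcK : c ≤ K := by
    rw [hK, le_div_iff₀ h1α]; nlinarith
  have hK0 : 0 ≤ K := hc0.trans hcK
  have hstep : ∀ n, p (x n) (x (n+1)) ≤ α ^ n * c := by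
    intro n
    induction n with
    | zero => simp [hx, hc]
    | succ n ih =>
      have h1 : x (n+2) = T (T (x n)) := by rw [hxsucc, hxsucc]
      have h2 : x (n+1) = T (x n) := hxsucc n
      calc p (x (n+1)) (x (n+2)) = p (T (x n)) (T (T (x n))) := by rw [h1, h2]
        _ ≤ α * p (x n) (T (x n)) := hcontr _
        _ = α * p (x n) (x (n+1)) := by rw [h2]
        _ ≤ α * (α ^ n * c) := by nlinarith
        _ = α ^ (n+1) * c := by ring
  have hbound : ∀ k n, p (x n) (x (n+k)) ≤ α ^ n * K := by
    intro k
    induction k with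
    | zero =>
      intro n
      calc p (x n) (x (n+0)) = p (x n) (x n) := by norm_num
        _ ≤ p (x n) (x (n+1)) := hp.self_le _ _
        _ ≤ α ^ n * c := hstep n
        _ ≤ α ^ n * K := by
            have : (0:ℝ) ≤ α ^ n := by positivity
            nlinarith
    | succ k ih =>
      intro n
      have htri := hp.triangle (x n) (x (n+1)) (x (n+1+k))
      have h1 : p (x (n+1)) (x (n+1+k)) ≤ α ^ (n+1) * K := ih (n+1)
      have h2 : p (x n) (x (n+1)) ≤ α ^ n * c := hstep n
      have h3 : 0 ≤ p (x (n+1)) (x (n+1)) := hp.nonneg _ _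
      have hind : n + (k+1) = n + 1 + k := by ring
      have hKc : α * K + c = K := by
        rw [hK]; field_simp [h1α.ne']; ring
      have hpow : (0:ℝ) ≤ α ^ n := by positivity
      calc p (x n) (x (n+(k+1))) = p (x n) (x (n+1+k)) := by rw [hind]
        _ ≤ p (x n) (x (n+1)) + p (x (n+1)) (x (n+1+k)) := by linarith
        _ ≤ α ^ n * c + α ^ (n+1) * K := by linarith
        _ = α ^ n * (c + α * K) := by ring
        _ = α ^ n * K := by rw [add_comm c (α*K), hKc]
  have hgen : ∀ mn : ℕ × ℕ, p (x mn.1) (x mn.2) ≤ α ^ (min mn.1 mn.2) * K := by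
    rintro ⟨m, n⟩
    rcases le_total m n with h | h
    · have := hbound (n - m) m
      rw [Nat.add_sub_cancel' h] at this
      simpa [min_eq_left h] using this
    · have := hbound (m - n) n
      rw [Nat.add_sub_cancel' h] at this
      rw [hp.symm] at this
      simpa [min_eq_right h] using this
  have hmin : Tendsto (fun mn : ℕ × ℕ => min mn.1 mn.2) atTop atTop := by
    rw [tendsto_atTop]
    intro b
    rw [← Filter.prod_atTop_atTop_eq]
    have h1 : ∀ᶠ mn : ℕ × ℕ in atTop ×ˢ atTop, b ≤ mn.1 :=
      Filter.Eventually.prod_inl (Filter.eventually_ge_atTop b) _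
    have h2 : ∀ᶠ mn : ℕ × ℕ in atTop ×ˢ atTop, b ≤ mn.2 :=
      Filter.Eventually.prod_inr (Filter.eventually_ge_atTop b) _
    filter_upwards [h1, h2] with mn hx1 hx2 using le_min hx1 hx2
  have hub : Tendsto (fun mn : ℕ × ℕ => α ^ (min mn.1 mn.2) * K) atTop (𝓝 0) := by
    have h0 : Tendsto (fun k : ℕ => α ^ k) atTop (𝓝 0) :=
      tendsto_pow_atTop_nhds_zero_of_lt_one (le_of_lt hα0) hα1
    have := (h0.comp hmin).mul_const K
    simpa using this
  have hcauchy : PZeroCauchy p x :=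
    tendsto_of_tendsto_of_tendsto_of_le_of_le tendsto_const_nhds hub
      (fun mn => hp.nonneg _ _) hgen
  obtain ⟨z, hconv, hz0⟩ := hcomp x hcauchy
  have hconv0 : Tendsto (fun n => p z (x n)) atTop (𝓝 0) := by
    have h := hconv
    unfold PConverges at h
    rwa [hz0] at h
  refine ⟨z, hz0, le_antisymm ?_ (hp.self_le _ _)⟩
  apply le_of_forall_pos_le_add
  intro ε hε
  obtain ⟨δ, hδ0, hδ⟩ := hT z (ε/2) (by linarith)
  have hpos : (0:ℝ) < min δ (ε/2) := lt_min hδ0 (by linarith)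
  obtain ⟨N, hN⟩ := Filter.eventually_atTop.1 (hconv0.eventually (gt_mem_nhds hpos))
  have hN1 : p z (x N) < min δ (ε/2) := hN N le_rfl
  have hN2 : p z (x (N+1)) < min δ (ε/2) := hN (N+1) (by omega)
  have hball : p z (x N) < p z z + δ := by
    rw [hz0]; have := min_le_left δ (ε/2); linarith
  have hcont := hδ (x N) hball
  rw [← hxsucc N] at hcont
  have htri := hp.triangle (T z) (x (N+1)) z
  have hnn : 0 ≤ p (x (N+1)) (x (N+1)) := hp.nonneg _ _
  have hsym : p (x (N+1)) z = p z (x (N+1)) := hp.symm _ _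
  have := min_le_right δ (ε/2)
  linarith
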